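/- The Lovász extension f̂ : [0,1]^d → R of a submodular function f : {0,1}^d → R is a convex function. -/

import Mathlib

open MeasureTheory

/-- A set function on subsets of `[d]` is submodular. -/
def Submodular {d : ℕ} (f : Set (Fin d) → ℝ) : Prop :=
  ∀ A B : Set (Fin d), f (A ∪ B) + f (A ∩ B) ≤ f A + f B

/-- The Lovász extension of `f`, via the expectation over a uniform threshold. -/
noncomputable def lovasz {d : ℕ} (f : Set (Fin d) → ℝ) (v : Fin d → ℝ) : ℝ :=
  ∫ τ in Set.Ioc (0 : ℝ) 1, f {j | τ < v j}

namespace LovaszProof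

open Finset

variable {d : ℕ}

/-- The chain of prefix sets of a permutation. -/
def C (σ : Equiv.Perm (Fin d)) (k : ℕ) : Set (Fin d) := {x | (σ.symm x : ℕ) < k}

/-- The values of `v` in the order of `σ`, padded with `0`. -/
noncomputable def vv (σ : Equiv.Perm (Fin d)) (v : Fin d → ℝ) (k : ℕ) : ℝ :=
  if h : k < d then v (σ ⟨k, h⟩) else 0

/-- marginal values along the chain -/
noncomputable def marg (f : Set (Fin d) → ℝ) (σ : Equiv.Perm (Fin d)) (k : ℕ) : ℝ :=
  f (C σ (k + 1)) - f (C σ k)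

open Classical in
noncomputable def indA (σ : Equiv.Perm (Fin d)) (A : Set (Fin d)) (k : ℕ) : ℝ :=
  if h : k < d then (if σ ⟨k, h⟩ ∈ A then 1 else 0) else 0

/-- The greedy affine functional attached to a permutation. -/
noncomputable def g (f : Set (Fin d) → ℝ) (σ : Equiv.Perm (Fin d)) (v : Fin d → ℝ) : ℝ :=
  f ∅ + ∑ k ∈ range d, vv σ v k * marg f σ k

lemma C_zero (σ : Equiv.Perm (Fin d)) : C σ 0 = ∅ := by
  ext x; simp [C]

lemma C_of_ge (σ : Equiv.Perm (Fin d)) {k : ℕ} (h : d ≤ k) : C σ k = Set.univ := by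
  ext x; simp only [C, Set.mem_setOf_eq, Set.mem_univ, iff_true]
  exact lt_of_lt_of_le (σ.symm x).isLt h

lemma C_succ (σ : Equiv.Perm (Fin d)) {k : ℕ} (h : k < d) :
    C σ (k + 1) = insert (σ ⟨k, h⟩) (C σ k) := by
  ext x
  have h1 : x = σ ⟨k, h⟩ ↔ ((σ.symm x : ℕ) = k) := by
    rw [← Equiv.symm_apply_eq, Fin.ext_iff]
  simp only [C, Set.mem_insert_iff, Set.mem_setOf_eq, h1]
  omega

lemma vv_of_ge (σ : Equiv.Perm (Fin d)) (v : Fin d → ℝ) {k : ℕ} (h : d ≤ k) :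
    vv σ v k = 0 := by
  rw [vv, dif_neg (by omega)]

lemma chain_aux (f : Set (Fin d) → ℝ) (hsub : Submodular f) (σ : Equiv.Perm (Fin d))
    (A : Set (Fin d)) :
    ∀ n : ℕ, ∑ k ∈ range n, indA σ A k * marg f σ k ≤ f (A ∩ C σ n) - f ∅ := by
  intro n
  induction n with
  | zero => simp [C_zero, Set.inter_empty]
  | succ n ih =>
    rw [Finset.sum_range_succ]
    by_cases hn : n < d
    · by_cases hA : σ ⟨n, hn⟩ ∈ A
      · have h1 : C σ n ∪ (A ∩ C σ (n + 1)) = C σ (n + 1) := by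
          rw [C_succ σ hn]
          ext x
          simp only [Set.mem_union, Set.mem_inter_iff, Set.mem_insert_iff]
          constructor
          · rintro (hx | ⟨_, h⟩)
            · exact Or.inr hx
            · exact h
          · rintro (rfl | hx)
            · exact Or.inr ⟨hA, Or.inl rfl⟩
            · exact Or.inl hx
        have h2 : C σ n ∩ (A ∩ C σ (n + 1)) = A ∩ C σ n := by
          rw [C_succ σ hn]
          ext x
          simp only [Set.mem_inter_iff, Set.mem_insert_iff]
          constructor
          · rintro ⟨hc, hxA, _⟩
            · exact ⟨hxA, hc⟩
          · rintro ⟨hxA, hc⟩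
            · exact ⟨hc, hxA, Or.inr hc⟩
        have key := hsub (C σ n) (A ∩ C σ (n + 1))
        rw [h1, h2] at key
        have hterm : indA σ A n * marg f σ n = f (C σ (n + 1)) - f (C σ n) := by
          rw [indA, dif_pos hn, if_pos hA, marg, one_mul]
        rw [hterm]
        linarith
      · have h3 : A ∩ C σ (n + 1) = A ∩ C σ n := by
          rw [C_succ σ hn]
          ext x
          simp only [Set.mem_inter_iff, Set.mem_insert_iff]
          constructor
          · rintro ⟨hxA, rfl | hx⟩
            · exact absurd hxA hA
            · exact ⟨hxA, hx⟩
          · rintro ⟨hxA, hx⟩; exact ⟨hxA, Or.inr hx⟩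
        have hterm : indA σ A n * marg f σ n = 0 := by
          rw [indA, dif_pos hn, if_neg hA, zero_mul]
        rw [hterm, h3]
        linarith
    · have hC : C σ (n + 1) = C σ n := by
        rw [C_of_ge σ (by omega), C_of_ge σ (by omega)]
      have hterm : indA σ A n * marg f σ n = 0 := by
        rw [indA, dif_neg hn, zero_mul]
      rw [hterm, hC]
      linarith

lemma tele (t : ℕ → ℝ) {m n : ℕ} (h : m ≤ n) :
    ∑ k ∈ Finset.Ico m n, (t k - t (k + 1)) = t m - t n := by
  induction n, h using Nat.le_induction with
  | base => simp
  | succ n hmn ih =>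
    rw [Finset.sum_Ico_succ_top (by omega), ih]
    ring

open Classical in
lemma value_eq (τ : Equiv.Perm (Fin d)) (v : Fin d → ℝ) (j : Fin d) :
    v j = ∑ m ∈ range d, (vv τ v m - vv τ v (m + 1)) *
      (if j ∈ C τ (m + 1) then 1 else 0) := by
  classical
  set mj : ℕ := (τ.symm j : ℕ) with hmj
  have hmjd : mj < d := (τ.symm j).isLt
  have hmem : ∀ m : ℕ, (j ∈ C τ (m + 1)) ↔ mj ≤ m := by
    intro m; simp only [C, Set.mem_setOf_eq, ← hmj]; omega
  have : ∑ m ∈ range d, (vv τ v m - vv τ v (m + 1)) * (if j ∈ C τ (m + 1) then 1 else 0)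
      = ∑ m ∈ range d, (if mj ≤ m then vv τ v m - vv τ v (m + 1) else 0) := by
    refine Finset.sum_congr rfl fun m _ => ?_
    by_cases hm : mj ≤ m
    · rw [if_pos ((hmem m).2 hm), if_pos hm, mul_one]
    · rw [if_neg (fun hc => hm ((hmem m).1 hc)), if_neg hm, mul_zero]
  rw [this, ← Finset.sum_filter]
  have hfil : (range d).filter (fun m => mj ≤ m) = Finset.Ico mj d := by
    ext m; simp only [Finset.mem_filter, Finset.mem_range, Finset.mem_Ico]; omega
  rw [hfil, tele (vv τ v) (le_of_lt hmjd), vv_of_ge τ v le_rfl, sub_zero, vv, dif_pos hmjd]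
  have hje : τ ⟨mj, hmjd⟩ = j := by
    have h5 : (⟨mj, hmjd⟩ : Fin d) = τ.symm j := Fin.eta _ _
    rw [h5, Equiv.apply_symm_apply]
  rw [hje]

lemma abel_eq (t u : ℕ → ℝ) (h0 : u 0 = 0) (hd : t d = 0) :
    ∑ k ∈ range d, (t k - t (k + 1)) * u (k + 1)
      = ∑ k ∈ range d, t k * (u (k + 1) - u k) := by
  have h1 : (∑ k ∈ range d, t (k + 1) * u (k + 1)) + t 0 * u 0
      = (∑ k ∈ range d, t k * u k) + t d * u d := by
    rw [← Finset.sum_range_succ' (fun k => t k * u k) d, Finset.sum_range_succ]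
  have h2 : ∑ k ∈ range d, t (k + 1) * u (k + 1) = ∑ k ∈ range d, t k * u k := by
    rw [h0, hd] at h1; linarith
  have e1 : ∑ k ∈ range d, (t k - t (k + 1)) * u (k + 1)
      = (∑ k ∈ range d, t k * u (k + 1)) - ∑ k ∈ range d, t (k + 1) * u (k + 1) := by
    rw [← Finset.sum_sub_distrib]
    exact Finset.sum_congr rfl fun k _ => by ring
  have e2 : ∑ k ∈ range d, t k * (u (k + 1) - u k)
      = (∑ k ∈ range d, t k * u (k + 1)) - ∑ k ∈ range d, t k * u k := by
    rw [← Finset.sum_sub_distrib]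
    exact Finset.sum_congr rfl fun k _ => by ring
  rw [e1, e2, h2]

open Classical in
lemma g_le_g (f : Set (Fin d) → ℝ) (hsub : Submodular f) (σ τ : Equiv.Perm (Fin d))
    (v : Fin d → ℝ) (hv0 : ∀ j, 0 ≤ v j)
    (hτ : ∀ k l : ℕ, k ≤ l → vv τ v l ≤ vv τ v k) :
    g f σ v ≤ g f τ v := by
  set t : ℕ → ℝ := vv τ v with ht
  have htd : t d = 0 := vv_of_ge τ v le_rfl
  have hc : ∀ m, 0 ≤ t m - t (m + 1) := fun m => sub_nonneg.2 (hτ m (m + 1) (by omega))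
  have key : ∀ k ∈ range d, vv σ v k * marg f σ k
      = ∑ m ∈ range d, (t m - t (m + 1)) * (indA σ (C τ (m + 1)) k * marg f σ k) := by
    intro k hk
    have hkd : k < d := Finset.mem_range.1 hk
    have hval : vv σ v k = ∑ m ∈ range d, (t m - t (m + 1)) * indA σ (C τ (m + 1)) k := by
      rw [vv, dif_pos hkd, value_eq τ v (σ ⟨k, hkd⟩)]
      refine Finset.sum_congr rfl fun m _ => ?_
      rw [indA, dif_pos hkd]
    rw [hval, Finset.sum_mul]
    exact Finset.sum_congr rfl fun m _ => by ring
  have hswap : ∑ k ∈ range d, vv σ v k * marg f σ k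
      = ∑ m ∈ range d, (t m - t (m + 1)) *
          (∑ k ∈ range d, indA σ (C τ (m + 1)) k * marg f σ k) := by
    rw [Finset.sum_congr rfl key, Finset.sum_comm]
    exact Finset.sum_congr rfl fun m _ => by rw [Finset.mul_sum]
  have hb : ∑ m ∈ range d, (t m - t (m + 1)) *
        (∑ k ∈ range d, indA σ (C τ (m + 1)) k * marg f σ k)
      ≤ ∑ m ∈ range d, (t m - t (m + 1)) * (f (C τ (m + 1)) - f ∅) := by
    refine Finset.sum_le_sum fun m _ => mul_le_mul_of_nonneg_left ?_ (hc m)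
    have h := chain_aux f hsub σ (C τ (m + 1)) d
    rwa [C_of_ge σ le_rfl, Set.inter_univ] at h
  have ha : ∑ m ∈ range d, (t m - t (m + 1)) * (f (C τ (m + 1)) - f ∅)
      = ∑ m ∈ range d, t m * marg f τ m := by
    have h := abel_eq t (fun m => f (C τ m) - f ∅) (by simp [C_zero]) htd
    rw [h]
    exact Finset.sum_congr rfl fun m _ => by rw [marg]; ring
  rw [g, g, hswap]
  have := ha ▸ hb
  linarith

lemma exists_sorting (v : Fin d → ℝ) (hv0 : ∀ j, 0 ≤ v j) :
    ∃ τ : Equiv.Perm (Fin d), ∀ k l : ℕ, k ≤ l → vv τ v l ≤ vv τ v k := by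
  refine ⟨Fin.revPerm.trans (Tuple.sort v), fun k l hkl => ?_⟩
  by_cases hl : l < d
  · have hk : k < d := lt_of_le_of_lt hkl hl
    rw [vv, vv, dif_pos hl, dif_pos hk]
    have hmono := Tuple.monotone_sort v
    have hrev : (⟨l, hl⟩ : Fin d).rev ≤ (⟨k, hk⟩ : Fin d).rev :=
      Fin.rev_le_rev.2 (by exact hkl)
    simpa [Equiv.trans_apply, Fin.revPerm_apply] using hmono hrev
  · rw [vv, dif_neg hl]
    by_cases hk : k < d
    · rw [vv, dif_pos hk]; exact hv0 _
    · rw [vv, dif_neg hk]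

lemma piece {F : ℝ → ℝ} {a b : ℝ} (hab : a ≤ b) (c : ℝ)
    (hF : ∀ x ∈ Set.Ioo a b, F x = c) :
    IntegrableOn F (Set.Ioc a b) volume ∧
      ∫ x in Set.Ioc a b, F x = (b - a) * c := by
  have hres : volume.restrict (Set.Ioc a b) = volume.restrict (Set.Ioo a b) :=
    (Measure.restrict_congr_set Ioo_ae_eq_Ioc).symm
  have hint : IntegrableOn F (Set.Ioo a b) volume := by
    refine (integrableOn_const measure_Ioo_lt_top.ne).congr_fun
      (fun x hx => (hF x hx).symm) measurableSet_Ioo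
  constructor
  · rw [IntegrableOn, hres]; exact hint
  · rw [setIntegral_congr_set Ioo_ae_eq_Ioc.symm,
      setIntegral_congr_fun measurableSet_Ioo hF, setIntegral_const, measureReal_def, Real.volume_Ioo,
      ENNReal.toReal_ofReal (by linarith), smul_eq_mul]

lemma split (F : ℝ → ℝ) (s : ℕ → ℝ) (hs : ∀ k, s (k + 1) ≤ s k) (c : ℕ → ℝ)
    (hF : ∀ n, ∀ x ∈ Set.Ioo (s (n + 1)) (s n), F x = c n) :
    ∀ N, IntegrableOn F (Set.Ioc (s N) (s 0)) volume ∧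
      ∫ x in Set.Ioc (s N) (s 0), F x = ∑ k ∈ Finset.range N, (s k - s (k + 1)) * c k := by
  have hanti : Antitone s := antitone_nat_of_succ_le hs
  intro N
  induction N with
  | zero => simp
  | succ N ih =>
    obtain ⟨ih1, ih2⟩ := ih
    obtain ⟨hp1, hp2⟩ := piece (hs N) (c N) (hF N)
    have hunion : Set.Ioc (s (N + 1)) (s N) ∪ Set.Ioc (s N) (s 0) =
        Set.Ioc (s (N + 1)) (s 0) :=
      Set.Ioc_union_Ioc_eq_Ioc (hs N) (hanti (Nat.zero_le N))
    have hdisj : Disjoint (Set.Ioc (s (N + 1)) (s N)) (Set.Ioc (s N) (s 0)) := by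
      apply Set.disjoint_left.2
      rintro x ⟨_, hx2⟩ ⟨hx3, _⟩
      exact absurd hx3 (not_lt.2 hx2)
    constructor
    · rw [← hunion]; exact hp1.union ih1
    · rw [← hunion, setIntegral_union hdisj measurableSet_Ioc hp1 ih1, hp2, ih2,
        Finset.sum_range_succ]
      ring

open Classical in
lemma lovasz_eq_g (f : Set (Fin d) → ℝ) (τ : Equiv.Perm (Fin d)) (v : Fin d → ℝ)
    (hv : ∀ j, v j ∈ Set.Icc (0 : ℝ) 1)
    (hτ : ∀ k l : ℕ, k ≤ l → vv τ v l ≤ vv τ v k) :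
    lovasz f v = g f τ v := by
  set t : ℕ → ℝ := vv τ v with ht
  have ht0 : ∀ k, 0 ≤ t k := by
    intro k; rw [ht, vv]; split
    · exact (hv _).1
    · exact le_rfl
  have ht1 : ∀ k, t k ≤ 1 := by
    intro k; rw [ht, vv]; split
    · exact (hv _).2
    · exact zero_le_one
  have htd : ∀ k, d ≤ k → t k = 0 := fun k hk => vv_of_ge τ v hk
  set s : ℕ → ℝ := fun k => Nat.rec 1 (fun m _ => t m) k with hsdef
  have hs0 : s 0 = 1 := rfl
  have hssucc : ∀ k, s (k + 1) = t k := fun k => rfl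
  have hs : ∀ k, s (k + 1) ≤ s k := by
    intro k
    cases k with
    | zero => rw [hssucc, hs0]; exact ht1 0
    | succ m => rw [hssucc, hssucc]; exact hτ m (m + 1) (by omega)
  have hanti : Antitone s := antitone_nat_of_succ_le hs
  have hlevel : ∀ n, ∀ x ∈ Set.Ioo (s (n + 1)) (s n), {j | x < v j} = C τ n := by
    intro n x hx
    by_cases hnd : n ≤ d
    · ext j
      set mj : ℕ := (τ.symm j : ℕ) with hmj
      have hmjd : mj < d := (τ.symm j).isLt
      have hvj : v j = t mj := by
        rw [ht, vv, dif_pos hmjd]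
        congr 1
        have h5 : (⟨mj, hmjd⟩ : Fin d) = τ.symm j := Fin.eta _ _
        rw [h5, Equiv.apply_symm_apply]
      simp only [Set.mem_setOf_eq, C, ← hmj]
      constructor
      · intro hlt
        by_contra hge
        push_neg at hge
        have : t mj ≤ t n := by
          rw [ht]; exact hτ n mj hge
        rw [hvj] at hlt
        have := hx.1
        rw [hssucc] at this
        linarith
      · intro hlt
        have h6 : s n ≤ t mj := by
          have : mj + 1 ≤ n := hlt
          calc s n ≤ s (mj + 1) := hanti this
            _ = t mj := hssucc mj
        rw [hvj]
        exact lt_of_lt_of_le hx.2 h6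
    · exfalso
      push_neg at hnd
      have h1 : s (n + 1) = 0 := by rw [hssucc]; exact htd n (by omega)
      have h2 : s n = 0 := by
        cases n with
        | zero => omega
        | succ m => rw [hssucc]; exact htd m (by omega)
      rw [h1, h2] at hx
      exact absurd hx.2 (not_lt.2 (le_of_lt hx.1))
  have hsplit := split (fun x => f {j | x < v j}) s hs (fun n => f (C τ n))
    (fun n x hx => by show f {j | x < v j} = f (C τ n); rw [hlevel n x hx]) (d + 1)
  have hsd1 : s (d + 1) = 0 := by rw [hssucc]; exact htd d le_rfl
  have hlov : lovasz f v = ∑ k ∈ Finset.range (d + 1), (s k - s (k + 1)) * f (C τ k) := by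
    rw [lovasz, ← hsplit.2, hsd1, hs0]
  rw [hlov]
  -- now pure algebra
  have habel : ∑ k ∈ Finset.range d, (t k - t (k + 1)) * (f (C τ (k + 1)) - f ∅)
      = ∑ k ∈ Finset.range d, t k * marg f τ k := by
    have h := abel_eq t (fun m => f (C τ m) - f ∅) (by simp [C_zero]) (htd d le_rfl)
    rw [h]
    exact Finset.sum_congr rfl fun m _ => by rw [marg]; ring
  have hsum1 : ∑ k ∈ Finset.range (d + 1), (s k - s (k + 1)) * f (C τ k)
      = (1 - t 0) * f ∅ + ∑ k ∈ Finset.range d, (t k - t (k + 1)) * f (C τ (k + 1)) := by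
    rw [Finset.sum_range_succ' (fun k => (s k - s (k + 1)) * f (C τ k)) d]
    simp only [hssucc, hs0, C_zero]
    ring
  have htele : ∑ k ∈ Finset.range d, (t k - t (k + 1)) = t 0 - t d := by
    have := tele t (Nat.zero_le d)
    rwa [← Finset.range_eq_Ico] at this
  have hsum2 : ∑ k ∈ Finset.range d, (t k - t (k + 1)) * f (C τ (k + 1))
      = (∑ k ∈ Finset.range d, (t k - t (k + 1)) * (f (C τ (k + 1)) - f ∅))
        + (t 0 - t d) * f ∅ := by
    rw [← htele, Finset.sum_mul, ← Finset.sum_add_distrib]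
    exact Finset.sum_congr rfl fun k _ => by ring
  rw [hsum1, hsum2, habel, htd d le_rfl, g]
  ring

lemma g_affine (f : Set (Fin d) → ℝ) (τ : Equiv.Perm (Fin d)) (v w : Fin d → ℝ)
    (a b : ℝ) (hab : a + b = 1) :
    g f τ (a • v + b • w) = a * g f τ v + b * g f τ w := by
  have hvv : ∀ k, vv τ (a • v + b • w) k = a * vv τ v k + b * vv τ w k := by
    intro k
    rw [vv, vv, vv]
    split
    · simp [smul_eq_mul]
    · ring
  rw [g, g, g]
  have hsum : ∑ k ∈ Finset.range d, vv τ (a • v + b • w) k * marg f τ k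
      = a * (∑ k ∈ Finset.range d, vv τ v k * marg f τ k)
        + b * (∑ k ∈ Finset.range d, vv τ w k * marg f τ k) := by
    rw [Finset.mul_sum, Finset.mul_sum, ← Finset.sum_add_distrib]
    exact Finset.sum_congr rfl fun k _ => by rw [hvv k]; ring
  rw [hsum]
  linear_combination (-(f ∅)) * hab

lemma g_le_lovasz (f : Set (Fin d) → ℝ) (hsub : Submodular f) (σ : Equiv.Perm (Fin d))
    (v : Fin d → ℝ) (hv : ∀ j, v j ∈ Set.Icc (0 : ℝ) 1) :
    g f σ v ≤ lovasz f v := by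
  obtain ⟨τ, hτ⟩ := exists_sorting v (fun j => (hv j).1)
  rw [lovasz_eq_g f τ v hv hτ]
  exact g_le_g f hsub σ τ v (fun j => (hv j).1) hτ

end LovaszProof

theorem stmt_12 {d : ℕ} (f : Set (Fin d) → ℝ) (hsub : Submodular f) :
    ConvexOn ℝ {v : Fin d → ℝ | ∀ j, v j ∈ Set.Icc (0 : ℝ) 1} (lovasz f) := by
  constructor
  · have hset : {v : Fin d → ℝ | ∀ j, v j ∈ Set.Icc (0 : ℝ) 1}
        = Set.pi Set.univ (fun _ => Set.Icc (0 : ℝ) 1) := by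
      ext v
      simp only [Set.mem_setOf_eq, Set.mem_pi]
      exact ⟨fun h j _ => h j, fun h j => h j (Set.mem_univ j)⟩
    rw [hset]
    exact convex_pi fun i _ => convex_Icc 0 1
  · intro v hv w hw a b ha hb hab
    have hz : ∀ j, (a • v + b • w) j ∈ Set.Icc (0 : ℝ) 1 := by
      intro j
      obtain ⟨h1, h2⟩ := hv j
      obtain ⟨h3, h4⟩ := hw j
      simp only [Pi.add_apply, Pi.smul_apply, smul_eq_mul, Set.mem_Icc]
      constructor
      · positivity
      · nlinarith
    obtain ⟨τ, hτ⟩ := LovaszProof.exists_sorting (a • v + b • w) (fun j => (hz j).1)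
    rw [LovaszProof.lovasz_eq_g f τ _ hz hτ, LovaszProof.g_affine f τ v w a b hab,
      smul_eq_mul, smul_eq_mul]
    exact add_le_add (mul_le_mul_of_nonneg_left (LovaszProof.g_le_lovasz f hsub τ v hv) ha)
      (mul_le_mul_of_nonneg_left (LovaszProof.g_le_lovasz f hsub τ w hw) hb)
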